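/- arXiv:2201.01262 — 3 statements merged into one kernel-verified Lean document; each statement's English description precedes it below -/
import Mathlib

section
/- Let the E0 state transition map T : GF(2)¹³² → GF(2)¹³² act on states (x₀,…,x₂₄, y₀,…,y₃₀, z₀,…,z₃₂, u₀,…,u₃₈, c₀, c₁, d₀, d₁) by shifting each of the four LFSR blocks left by one position with new last entries x₀+x₅+x₁₃+x₁₇, y₀+y₇+y₁₅+y₁₉, z₀+z₅+z₉+z₂₉, u₀+u₃+u₁₁+u₃₅ respectively, and replacing (c₀,c₁,d₀,d₁) by (c₁, g₀', d₁, g₁'), where g₀' = x₁c₁ + y₇c₁ + z₁c₁ + u₇c₁ + x₁y₇ + x₁z₁ + x₁u₇ + y₇z₁ + y₇u₇ + z₁u₇ + c₁ + d₁ + c₀ + d₀ and g₁' = x₁y₇z₁u₇ + x₁y₇d₁ + x₁z₁d₁ + x₁u₇d₁ + y₇z₁d₁ + y₇u₇d₁ + z₁u₇d₁ + x₁c₁d₁ + y₇c₁d₁ + z₁c₁d₁ + u₇c₁d₁ + x₁y₇z₁c₁ + x₁y₇u₇c₁ + x₁z₁u₇c₁ + y₇z₁u₇c₁ + d₁ +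 c₀. Then T is a bijection of GF(2)¹³². -/
/-- The 132-bit internal state of the Bluetooth cipher E0. -/
structure E0State where
  x : Fin 25 → ZMod 2
  y : Fin 31 → ZMod 2
  z : Fin 33 → ZMod 2
  u : Fin 39 → ZMod 2
  c0 : ZMod 2
  c1 : ZMod 2
  d0 : ZMod 2
  d1 : ZMod 2

/-- The E0 state transition map. -/
def E0T (s : E0State) : E0State where
  x := fun j => if h : (j : ℕ) + 1 < 25 then s.x ⟨(j : ℕ) + 1, h⟩
                else s.x 0 + s.x 5 + s.x 13 + s.x 17
  y := fun j => if h : (j : ℕ) + 1 < 31 then s.y ⟨(j : ℕ) + 1, h⟩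
                else s.y 0 + s.y 7 + s.y 15 + s.y 19
  z := fun j => if h : (j : ℕ) + 1 < 33 then s.z ⟨(j : ℕ) + 1, h⟩
                else s.z 0 + s.z 5 + s.z 9 + s.z 29
  u := fun j => if h : (j : ℕ) + 1 < 39 then s.u ⟨(j : ℕ) + 1, h⟩
                else s.u 0 + s.u 3 + s.u 11 + s.u 35
  c0 := s.c1
  c1 :=
    s.x 1 * s.c1 + s.y 7 * s.c1 + s.z 1 * s.c1 + s.u 7 * s.c1
    + s.x 1 * s.y 7 + s.x 1 * s.z 1 + s.x 1 * s.u 7 + s.y 7 * s.z 1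
    + s.y 7 * s.u 7 + s.z 1 * s.u 7 + s.c1 + s.d1 + s.c0 + s.d0
  d0 := s.d1
  d1 :=
    s.x 1 * s.y 7 * s.z 1 * s.u 7 + s.x 1 * s.y 7 * s.d1 + s.x 1 * s.z 1 * s.d1
    + s.x 1 * s.u 7 * s.d1 + s.y 7 * s.z 1 * s.d1 + s.y 7 * s.u 7 * s.d1
    + s.z 1 * s.u 7 * s.d1 + s.x 1 * s.c1 * s.d1 + s.y 7 * s.c1 * s.d1
    + s.z 1 * s.c1 * s.d1 + s.u 7 * s.c1 * s.d1 + s.x 1 * s.y 7 * s.z 1 * s.c1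
    + s.x 1 * s.y 7 * s.u 7 * s.c1 + s.x 1 * s.z 1 * s.u 7 * s.c1
    + s.y 7 * s.z 1 * s.u 7 * s.c1 + s.d1 + s.c0

@[simp] lemma fv_25_0 : ((0:Fin 25):ℕ) = 0 := rfl
@[simp] lemma fv_25_1 : ((1:Fin 25):ℕ) = 1 := rfl
@[simp] lemma fv_25_4 : ((4:Fin 25):ℕ) = 4 := rfl
@[simp] lemma fv_25_5 : ((5:Fin 25):ℕ) = 5 := rfl
@[simp] lemma fv_25_12 : ((12:Fin 25):ℕ) = 12 := rfl
@[simp] lemma fv_25_13 : ((13:Fin 25):ℕ) = 13 := rfl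
@[simp] lemma fv_25_16 : ((16:Fin 25):ℕ) = 16 := rfl
@[simp] lemma fv_25_17 : ((17:Fin 25):ℕ) = 17 := rfl
@[simp] lemma fv_25_24 : ((24:Fin 25):ℕ) = 24 := rfl
@[simp] lemma fv_31_0 : ((0:Fin 31):ℕ) = 0 := rfl
@[simp] lemma fv_31_6 : ((6:Fin 31):ℕ) = 6 := rfl
@[simp] lemma fv_31_7 : ((7:Fin 31):ℕ) = 7 := rfl
@[simp] lemma fv_31_14 : ((14:Fin 31):ℕ) = 14 := rfl
@[simp] lemma fv_31_15 : ((15:Fin 31):ℕ) = 15 := rfl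
@[simp] lemma fv_31_18 : ((18:Fin 31):ℕ) = 18 := rfl
@[simp] lemma fv_31_19 : ((19:Fin 31):ℕ) = 19 := rfl
@[simp] lemma fv_31_30 : ((30:Fin 31):ℕ) = 30 := rfl
@[simp] lemma fv_33_0 : ((0:Fin 33):ℕ) = 0 := rfl
@[simp] lemma fv_33_1 : ((1:Fin 33):ℕ) = 1 := rfl
@[simp] lemma fv_33_4 : ((4:Fin 33):ℕ) = 4 := rfl
@[simp] lemma fv_33_5 : ((5:Fin 33):ℕ) = 5 := rfl
@[simp] lemma fv_33_8 : ((8:Fin 33):ℕ) = 8 := rfl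
@[simp] lemma fv_33_9 : ((9:Fin 33):ℕ) = 9 := rfl
@[simp] lemma fv_33_28 : ((28:Fin 33):ℕ) = 28 := rfl
@[simp] lemma fv_33_29 : ((29:Fin 33):ℕ) = 29 := rfl
@[simp] lemma fv_33_32 : ((32:Fin 33):ℕ) = 32 := rfl
@[simp] lemma fv_39_0 : ((0:Fin 39):ℕ) = 0 := rfl
@[simp] lemma fv_39_2 : ((2:Fin 39):ℕ) = 2 := rfl
@[simp] lemma fv_39_3 : ((3:Fin 39):ℕ) = 3 := rfl
@[simp] lemma fv_39_6 : ((6:Fin 39):ℕ) = 6 := rfl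
@[simp] lemma fv_39_7 : ((7:Fin 39):ℕ) = 7 := rfl
@[simp] lemma fv_39_10 : ((10:Fin 39):ℕ) = 10 := rfl
@[simp] lemma fv_39_11 : ((11:Fin 39):ℕ) = 11 := rfl
@[simp] lemma fv_39_34 : ((34:Fin 39):ℕ) = 34 := rfl
@[simp] lemma fv_39_35 : ((35:Fin 39):ℕ) = 35 := rfl
@[simp] lemma fv_39_38 : ((38:Fin 39):ℕ) = 38 := rfl

def E0Inv (t : E0State) : E0State where
  x := fun j => if _ : (j : ℕ) = 0 then t.x 24 + t.x 4 + t.x 12 + t.x 16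
                else t.x ⟨(j : ℕ) - 1, by omega⟩
  y := fun j => if _ : (j : ℕ) = 0 then t.y 30 + t.y 6 + t.y 14 + t.y 18
                else t.y ⟨(j : ℕ) - 1, by omega⟩
  z := fun j => if _ : (j : ℕ) = 0 then t.z 32 + t.z 4 + t.z 8 + t.z 28
                else t.z ⟨(j : ℕ) - 1, by omega⟩
  u := fun j => if _ : (j : ℕ) = 0 then t.u 38 + t.u 2 + t.u 10 + t.u 34
                else t.u ⟨(j : ℕ) - 1, by omega⟩
  c1 := t.c0
  d1 := t.d0
  c0 :=
    t.d1
    + t.x 0 * t.y 6 * t.z 0 * t.u 6 + t.x 0 * t.y 6 * t.d0 + t.x 0 * t.z 0 * t.d0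
    + t.x 0 * t.u 6 * t.d0 + t.y 6 * t.z 0 * t.d0 + t.y 6 * t.u 6 * t.d0
    + t.z 0 * t.u 6 * t.d0 + t.x 0 * t.c0 * t.d0 + t.y 6 * t.c0 * t.d0
    + t.z 0 * t.c0 * t.d0 + t.u 6 * t.c0 * t.d0 + t.x 0 * t.y 6 * t.z 0 * t.c0
    + t.x 0 * t.y 6 * t.u 6 * t.c0 + t.x 0 * t.z 0 * t.u 6 * t.c0
    + t.y 6 * t.z 0 * t.u 6 * t.c0 + t.d0
  d0 :=
    t.c1
    + t.x 0 * t.c0 + t.y 6 * t.c0 + t.z 0 * t.c0 + t.u 6 * t.c0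
    + t.x 0 * t.y 6 + t.x 0 * t.z 0 + t.x 0 * t.u 6 + t.y 6 * t.z 0
    + t.y 6 * t.u 6 + t.z 0 * t.u 6 + t.c0 + t.d0
    + (t.d1
    + t.x 0 * t.y 6 * t.z 0 * t.u 6 + t.x 0 * t.y 6 * t.d0 + t.x 0 * t.z 0 * t.d0
    + t.x 0 * t.u 6 * t.d0 + t.y 6 * t.z 0 * t.d0 + t.y 6 * t.u 6 * t.d0
    + t.z 0 * t.u 6 * t.d0 + t.x 0 * t.c0 * t.d0 + t.y 6 * t.c0 * t.d0
    + t.z 0 * t.c0 * t.d0 + t.u 6 * t.c0 * t.d0 + t.x 0 * t.y 6 * t.z 0 * t.c0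
    + t.x 0 * t.y 6 * t.u 6 * t.c0 + t.x 0 * t.z 0 * t.u 6 * t.c0
    + t.y 6 * t.z 0 * t.u 6 * t.c0 + t.d0)

lemma left_inv (s : E0State) : E0Inv (E0T s) = s := by
  cases s with
  | mk x y z u c0 c1 d0 d1 =>
    simp only [E0T, E0Inv, E0State.mk.injEq]
    refine ⟨?_, ?_, ?_, ?_, ?_, ?_, ?_, ?_⟩ <;>
      first
        | (funext j; fin_cases j <;> simp <;> (try ring_nf) <;>
            simp [CharTwo.two_eq_zero] <;> (try ring_nf) <;> try (right; decide))
        | (simp <;> (try ring_nf) <;> simp [CharTwo.two_eq_zero] <;> (try ring_nf) <;> try (right; decide))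

lemma right_inv (t : E0State) : E0T (E0Inv t) = t := by
  cases t with
  | mk x y z u c0 c1 d0 d1 =>
    simp only [E0T, E0Inv, E0State.mk.injEq]
    refine ⟨?_, ?_, ?_, ?_, ?_, ?_, ?_, ?_⟩ <;>
      first
        | (funext j; fin_cases j <;> simp <;> (try ring_nf) <;>
            simp [CharTwo.two_eq_zero] <;> (try ring_nf) <;> try (right; decide))
        | (simp <;> (try ring_nf) <;> simp [CharTwo.two_eq_zero] <;> (try ring_nf) <;> try (right; decide))

/-- The E0 state transition map is a bijection of GF(2)^132. -/
theorem stmt_13 : Function.Bijective E0T := by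
  exact Function.bijective_iff_has_inverse.mpr ⟨E0Inv, left_inv, right_inv⟩
end

section
/- Over GF(2), consider the polynomial G = (A₁ + 1)·A₃ + A₂ + A₄ in the 14 variables x₁, x₂, x₃, y₇, y₈, y₉, z₁, z₂, z₃, u₇, u₈, u₉, c₀, d₀, where (for fixed parameters b₀, b₁, b₂ ∈ GF(2)): A₁ = u₇x₁ + u₇y₇ + u₇z₁ + x₁y₇ + x₁z₁ + y₇z₁ + b₀(x₁+y₇+z₁+u₇) + c₀ + d₀ + x₂ + y₈ + z₂ + u₈ + b₀ + b₁; A₂ = u₈x₂ + u₈y₈ + u₈z₂ + x₂y₈ + x₂z₂ + y₈z₂ + b₁(x₂+y₈+z₂+u₈) + x₁ + x₃ + y₇ + y₉ + z₁ + z₃ + u₇ + u₉ + b₀ + b₁ + b₂; A₃ = u₇x₁ + u₇y₇ + u₇z₁ + x₁y₇ + x₁z₁ + y₇z₁ + (b₀+1)(x₁+y₇+z₁+u₇) + 1; A₄ = u₇x₁y₇z₁ + (b₀+1)(u₇x₁y₇ + u₇x₁z₁ + u₇y₇z₁ + x₁y₇z₁) + c₀. Then for every choice of b₀, b₁, b₂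 ∈ GF(2), the Boolean function GF(2)¹⁴ → GF(2) induced by G is balanced: it takes the value 0 on exactly 2¹³ of the 2¹⁴ input vectors. -/
/-- The polynomial G = (A₁+1)A₃ + A₂ + A₄ in 14 variables from the attack on E0. -/
def Gfun (b0 b1 b2 x1 x2 x3 y7 y8 y9 z1 z2 z3 u7 u8 u9 c0 d0 : ZMod 2) : ZMod 2 :=
  let A1 := u7*x1 + u7*y7 + u7*z1 + x1*y7 + x1*z1 + y7*z1
    + b0*(x1 + y7 + z1 + u7) + c0 + d0 + x2 + y8 + z2 + u8 + b0 + b1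
  let A2 := u8*x2 + u8*y8 + u8*z2 + x2*y8 + x2*z2 + y8*z2
    + b1*(x2 + y8 + z2 + u8) + x1 + x3 + y7 + y9 + z1 + z3 + u7 + u9 + b0 + b1 + b2
  let A3 := u7*x1 + u7*y7 + u7*z1 + x1*y7 + x1*z1 + y7*z1
    + (b0 + 1)*(x1 + y7 + z1 + u7) + 1
  let A4 := u7*x1*y7*z1 + (b0 + 1)*(u7*x1*y7 + u7*x1*z1 + u7*y7*z1 + x1*y7*z1) + c0
  (A1 + 1) * A3 + A2 + A4

lemma Gfun_flip (b0 b1 b2 x1 x2 x3 y7 y8 y9 z1 z2 z3 u7 u8 u9 c0 d0 : ZMod 2) :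
    Gfun b0 b1 b2 x1 x2 (x3 + 1) y7 y8 y9 z1 z2 z3 u7 u8 u9 c0 d0
      = Gfun b0 b1 b2 x1 x2 x3 y7 y8 y9 z1 z2 z3 u7 u8 u9 c0 d0 + 1 := by
  simp only [Gfun]; ring

/-- For every choice of the keystream bits b₀, b₁, b₂, the Boolean function
GF(2)¹⁴ → GF(2) induced by G is balanced: it vanishes on exactly 2¹³ inputs. -/
theorem stmt_16 (b0 b1 b2 : ZMod 2) :
    Nat.card {v : Fin 14 → ZMod 2 //
      Gfun b0 b1 b2 (v 0) (v 1) (v 2) (v 3) (v 4) (v 5) (v 6) (v 7) (v 8)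
        (v 9) (v 10) (v 11) (v 12) (v 13) = 0} = 2 ^ 13 := by
  set g : (Fin 14 → ZMod 2) → ZMod 2 := fun v =>
    Gfun b0 b1 b2 (v 0) (v 1) (v 2) (v 3) (v 4) (v 5) (v 6) (v 7) (v 8)
      (v 9) (v 10) (v 11) (v 12) (v 13) with hg
  have key : ∀ v : Fin 14 → ZMod 2, g (Function.update v 2 (v 2 + 1)) = g v + 1 := by
    intro v
    have h2 : (Function.update v 2 (v 2 + 1)) 2 = v 2 + 1 := by simp
    have h : ∀ i : Fin 14, i ≠ 2 → (Function.update v 2 (v 2 + 1)) i = v i := by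
      intro i hi; simp [Function.update_of_ne hi]
    simp only [hg]
    rw [h 0 (by decide), h 1 (by decide), h2, h 3 (by decide), h 4 (by decide),
      h 5 (by decide), h 6 (by decide), h 7 (by decide), h 8 (by decide),
      h 9 (by decide), h 10 (by decide), h 11 (by decide), h 12 (by decide),
      h 13 (by decide)]
    exact Gfun_flip _ _ _ _ _ _ _ _ _ _ _ _ _ _ _ _ _
  -- equivalence between {g v = 0} and {g v ≠ 0}
  have e : {v : Fin 14 → ZMod 2 // g v = 0} ≃ {v : Fin 14 → ZMod 2 // ¬ g v = 0} := by
    refine ⟨fun ⟨v, hv⟩ => ⟨Function.update v 2 (v 2 + 1), ?_⟩,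
      fun ⟨v, hv⟩ => ⟨Function.update v 2 (v 2 + 1), ?_⟩, ?_, ?_⟩
    · rw [key, hv]; decide
    · rw [key]
      have : g v = 1 := by
        have := hv; revert this; generalize g v = a; revert a; decide
      rw [this]; decide
    · rintro ⟨v, hv⟩
      ext i
      by_cases hi : i = 2
      · subst hi; simp [Function.update_self]; ring_nf
        rw [show (2:ZMod 2) = 0 by decide, zero_add]
      · simp [Function.update_of_ne hi]
    · rintro ⟨v, hv⟩
      ext i
      by_cases hi : i = 2
      · subst hi; simp [Function.update_self]; ring_nf
        rw [show (2:ZMod 2) = 0 by decide, zero_add]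
      · simp [Function.update_of_ne hi]
  have h1 : Nat.card {v : Fin 14 → ZMod 2 // g v = 0}
      = Nat.card {v : Fin 14 → ZMod 2 // ¬ g v = 0} := Nat.card_congr e
  have h2 : Nat.card {v : Fin 14 → ZMod 2 // g v = 0}
      + Nat.card {v : Fin 14 → ZMod 2 // ¬ g v = 0}
      = Nat.card (Fin 14 → ZMod 2) := by
    simp only [Nat.card_eq_fintype_card]
    rw [Fintype.card_subtype_compl]
    have hle : Fintype.card {v : Fin 14 → ZMod 2 // g v = 0}
        ≤ Fintype.card (Fin 14 → ZMod 2) := Fintype.card_subtype_le _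
    omega
  have h3 : Nat.card (Fin 14 → ZMod 2) = 2 ^ 14 := by
    simp [Nat.card_eq_fintype_card]
  change Nat.card {v : Fin 14 → ZMod 2 // g v = 0} = 2 ^ 13
  omega
end

section
/- Let K be a field, R = K[{xᵢ(t) : 1 ≤ i ≤ n, t ∈ ℕ}], σ : R → R the shift endomorphism xᵢ(t) ↦ xᵢ(t+1), and let R̄ = K[{xᵢ(j) : 0 ≤ j ≤ rᵢ−1}] ⊆ R with T̄ : R̄ → R̄ the state transition endomorphism of an explicit difference system with defining polynomials f₁,…,fₙ ∈ R̄ (T̄ maps xᵢ(j) ↦ xᵢ(j+1) for j < rᵢ−1 and xᵢ(rᵢ−1) ↦ fᵢ). Define φ : R → R̄ as the algebra homomorphism that is the identity on R̄ and sends xᵢ(rᵢ + t) ↦ T̄^t(fᵢ) for all t ≥ 0. Then φ ∘ σ = T̄ ∘ φ, and the kernel of φ equals the difference ideal I of R generated (as a σ-stable ideal) by x₁(r₁) − f₁, …, xₙ(rₙ) − fₙ. -/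
open MvPolynomial

/-- The evaluation morphism φ : R → R̄ intertwines the shift σ with the state
transition endomorphism T̄, and its kernel is the σ-difference ideal generated
by the polynomials xᵢ(rᵢ) − fᵢ (Theorem 3.12 of the paper). -/
theorem stmt_19 (K : Type*) [Field K] (n : ℕ) (r : Fin n → ℕ)
    (f : (i : Fin n) → MvPolynomial {p : Fin n × ℕ // p.2 < r p.1} K)
    (σ : MvPolynomial (Fin n × ℕ) K →ₐ[K] MvPolynomial (Fin n × ℕ) K)
    (hσ : ∀ (i : Fin n) (t : ℕ), σ (X (i, t)) = X (i, t + 1))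
    (ι : MvPolynomial {p : Fin n × ℕ // p.2 < r p.1} K →ₐ[K]
          MvPolynomial (Fin n × ℕ) K)
    (hι : ∀ q : {p : Fin n × ℕ // p.2 < r p.1}, ι (X q) = X q.val)
    (Tbar : MvPolynomial {p : Fin n × ℕ // p.2 < r p.1} K →ₐ[K]
             MvPolynomial {p : Fin n × ℕ // p.2 < r p.1} K)
    (hT : ∀ q : {p : Fin n × ℕ // p.2 < r p.1},
      Tbar (X q) = if h : q.val.2 + 1 < r q.val.1
        then X (⟨(q.val.1, q.val.2 + 1), h⟩ : {p : Fin n × ℕ // p.2 < r p.1})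
        else f q.val.1)
    (φ : MvPolynomial (Fin n × ℕ) K →ₐ[K]
           MvPolynomial {p : Fin n × ℕ // p.2 < r p.1} K)
    (hφ1 : ∀ q : {p : Fin n × ℕ // p.2 < r p.1}, φ (X q.val) = X q)
    (hφ2 : ∀ (i : Fin n) (t : ℕ),
      φ (X (i, r i + t)) = (fun p => Tbar p)^[t] (f i)) :
    (∀ p, φ (σ p) = Tbar (φ p)) ∧
    RingHom.ker φ =
      Ideal.span {g : MvPolynomial (Fin n × ℕ) K |
        ∃ (i : Fin n) (t : ℕ),
          g = (fun p => σ p)^[t] (X (i, r i) - ι (f i))} := by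
  set J := Ideal.span {g : MvPolynomial (Fin n × ℕ) K |
    ∃ (i : Fin n) (t : ℕ), g = (fun p => σ p)^[t] (X (i, r i) - ι (f i))} with hJ
  -- Part 1 : intertwining
  have key : ∀ p, φ (σ p) = Tbar (φ p) := by
    have hcomp : φ.comp σ = Tbar.comp φ := by
      apply MvPolynomial.algHom_ext
      rintro ⟨i, t⟩
      simp only [AlgHom.comp_apply]
      rw [hσ]
      by_cases h : t < r i
      · rw [hφ1 ⟨(i, t), h⟩, hT]
        by_cases h2 : t + 1 < r i
        · rw [dif_pos h2, hφ1 ⟨(i, t + 1), h2⟩]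
        · rw [dif_neg h2]
          have ht : t + 1 = r i + 0 := by omega
          rw [ht, hφ2 i 0]
          rfl
      · obtain ⟨s, rfl⟩ : ∃ s, t = r i + s := ⟨t - r i, by omega⟩
        have h1 : r i + s + 1 = r i + (s + 1) := by ring
        rw [h1, hφ2 i (s + 1), hφ2 i s, Function.iterate_succ_apply']
    intro p
    exact DFunLike.congr_fun hcomp p
  -- φ ∘ ι = id
  have hφι : ∀ q, φ (ι q) = q := by
    have hcomp : φ.comp ι = AlgHom.id K _ := by
      apply MvPolynomial.algHom_ext
      intro q
      simp only [AlgHom.comp_apply, AlgHom.id_apply]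
      rw [hι, hφ1]
    intro q
    exact DFunLike.congr_fun hcomp q
  -- σ preserves J
  have hσJ : ∀ x ∈ J, σ x ∈ J := by
    intro x hx
    induction hx using Submodule.span_induction with
    | mem g hg =>
      obtain ⟨i, t, rfl⟩ := hg
      exact Ideal.subset_span ⟨i, t + 1, (Function.iterate_succ_apply' _ t _).symm⟩
    | zero => simp
    | add a b _ _ ha hb => rw [map_add]; exact J.add_mem ha hb
    | smul a b _ hb =>
      rw [smul_eq_mul, map_mul]
      exact J.mul_mem_left _ hb
  -- iterate of σ commutes with subtraction
  have iter_sub : ∀ (t : ℕ) (a b : MvPolynomial (Fin n × ℕ) K),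
      (fun p => σ p)^[t] (a - b) = (fun p => σ p)^[t] a - (fun p => σ p)^[t] b := by
    intro t
    induction t with
    | zero => intro a b; rfl
    | succ t ih =>
      intro a b
      rw [Function.iterate_succ_apply', Function.iterate_succ_apply',
        Function.iterate_succ_apply', ih, map_sub]
  -- base case for L1
  have Lbase : ∀ s : {p : Fin n × ℕ // p.2 < r p.1},
      σ (ι (X s)) - ι (Tbar (X s)) ∈ J := by
    rintro ⟨⟨i, j⟩, hj⟩
    rw [hι, hT]
    simp only
    rw [hσ]
    by_cases h2 : j + 1 < r i
    · rw [dif_pos h2, hι ⟨(i, j + 1), h2⟩]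
      simp
    · rw [dif_neg h2]
      have hj' : j < r i := hj
      have hj1 : j + 1 = r i := by omega
      rw [hj1]
      exact Ideal.subset_span ⟨i, 0, rfl⟩
  -- L1 : σ∘ι ≡ ι∘Tbar mod J
  have L1 : ∀ q, σ (ι q) - ι (Tbar q) ∈ J := by
    intro q
    induction q using MvPolynomial.induction_on with
    | C a => simp [algHom_C]
    | add p q hp hq =>
      have heq : σ (ι (p + q)) - ι (Tbar (p + q)) =
          (σ (ι p) - ι (Tbar p)) + (σ (ι q) - ι (Tbar q)) := by
        rw [map_add, map_add, map_add, map_add]; ring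
      rw [heq]
      exact J.add_mem hp hq
    | mul_X p s hp =>
      have heq : σ (ι (p * X s)) - ι (Tbar (p * X s)) =
          σ (ι p) * (σ (ι (X s)) - ι (Tbar (X s))) +
          (σ (ι p) - ι (Tbar p)) * ι (Tbar (X s)) := by
        rw [map_mul, map_mul, map_mul, map_mul]; ring
      rw [heq]
      exact J.add_mem (J.mul_mem_left _ (Lbase s)) (J.mul_mem_right _ hp)
  -- L2 : iterated version
  have L2 : ∀ (t : ℕ) (q), (fun p => σ p)^[t] (ι q) -
      ι ((fun p => Tbar p)^[t] q) ∈ J := by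
    intro t
    induction t with
    | zero => intro q; simp
    | succ t ih =>
      intro q
      rw [Function.iterate_succ_apply', Function.iterate_succ_apply']
      have heq : σ ((fun p => σ p)^[t] (ι q)) - ι (Tbar ((fun p => Tbar p)^[t] q)) =
          σ ((fun p => σ p)^[t] (ι q) - ι ((fun p => Tbar p)^[t] q)) +
          (σ (ι ((fun p => Tbar p)^[t] q)) - ι (Tbar ((fun p => Tbar p)^[t] q))) := by
        rw [map_sub]; ring
      rw [heq]
      exact J.add_mem (hσJ _ (ih q)) (L1 _)
  -- iterate of σ on a variable
  have iterX : ∀ (i : Fin n) (t : ℕ),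
      (fun p => σ p)^[t] (X ((i, r i) : Fin n × ℕ)) = X (i, r i + t) := by
    intro i t
    induction t with
    | zero => rfl
    | succ t ih =>
      rw [Function.iterate_succ_apply', ih, hσ]
      rfl
  -- main : p ≡ ι (φ p) mod J
  have main : ∀ p, p - ι (φ p) ∈ J := by
    intro p
    induction p using MvPolynomial.induction_on with
    | C a => simp [algHom_C]
    | add p q hp hq =>
      have heq : (p + q) - ι (φ (p + q)) = (p - ι (φ p)) + (q - ι (φ q)) := by
        rw [map_add, map_add]; ring
      rw [heq]
      exact J.add_mem hp hq
    | mul_X p s hp =>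
      have base : X s - ι (φ (X s)) ∈ J := by
        obtain ⟨i, j⟩ := s
        by_cases h : j < r i
        · rw [hφ1 ⟨(i, j), h⟩, hι]
          simp
        · obtain ⟨t, rfl⟩ : ∃ t, j = r i + t := ⟨j - r i, by omega⟩
          rw [hφ2]
          have g1 : (fun p => σ p)^[t] (X ((i, r i) : Fin n × ℕ) - ι (f i)) ∈ J :=
            Ideal.subset_span ⟨i, t, rfl⟩
          have g3 := L2 t (f i)
          have heq : X ((i, r i + t) : Fin n × ℕ) - ι ((fun p => Tbar p)^[t] (f i)) =
              (fun p => σ p)^[t] (X ((i, r i) : Fin n × ℕ) - ι (f i)) +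
              ((fun p => σ p)^[t] (ι (f i)) - ι ((fun p => Tbar p)^[t] (f i))) := by
            rw [iter_sub, iterX]; ring
          rw [heq]
          exact J.add_mem g1 g3
      have heq : (p * X s) - ι (φ (p * X s)) =
          p * (X s - ι (φ (X s))) + (p - ι (φ p)) * ι (φ (X s)) := by
        rw [map_mul, map_mul]; ring
      rw [heq]
      exact J.add_mem (J.mul_mem_left _ base) (J.mul_mem_right _ hp)
  -- iterate commutation for φ
  have comm : ∀ (t : ℕ) (p), φ ((fun p => σ p)^[t] p) = (fun p => Tbar p)^[t] (φ p) := by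
    intro t
    induction t with
    | zero => intro p; rfl
    | succ t ih =>
      intro p
      rw [Function.iterate_succ_apply', Function.iterate_succ_apply', key, ih]
  refine ⟨key, le_antisymm ?_ ?_⟩
  · intro p hp
    have hp0 : φ p = 0 := hp
    have := main p
    rw [hp0, map_zero, sub_zero] at this
    exact this
  · rw [Ideal.span_le]
    rintro g ⟨i, t, rfl⟩
    simp only [SetLike.mem_coe, RingHom.mem_ker]
    show φ ((fun p => σ p)^[t] (X (i, r i) - ι (f i))) = 0
    rw [comm, map_sub, hφι]
    have h0 : φ (X ((i, r i) : Fin n × ℕ)) = f i := by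
      have := hφ2 i 0
      simpa using this
    rw [h0, sub_self]
    simp
end
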